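/- For all natural numbers n and k with 2k ≤ n, the coefficient c(n, n-2k) in the expansion of x^n in the Fibonacci polynomial basis equals C(n,k) - C(n,k-1), where the Fibonacci polynomials satisfy F_n(x) = x·F_{n-1}(x) - F_{n-2}(x) with F_0 = 1, F_1 = x, and the coefficients are defined by x^n = Σ_k c(n,k)·F_k(x). -/

import Mathlib

open Polynomial Finset

/-- Fibonacci polynomials: F₀ = 1, F₁ = X, Fₙ = X·Fₙ₋₁ - Fₙ₋₂. -/
noncomputable def fibPoly : ℕ → Polynomial ℚ
  | 0 => 1
  | 1 => X
  | (n + 2) => X * fibPoly (n + 1) - fibPoly n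

lemma fib_spec : ∀ n, (fibPoly n).Monic ∧ (fibPoly n).natDegree = n
  | 0 => ⟨monic_one, by simp [fibPoly]⟩
  | 1 => ⟨monic_X, by simp [fibPoly]⟩
  | (n+2) => by
    obtain ⟨h1m, h1d⟩ := fib_spec (n+1)
    obtain ⟨h0m, h0d⟩ := fib_spec n
    have hm : (X * fibPoly (n+1)).Monic := monic_X.mul h1m
    have hd : (X * fibPoly (n+1)).natDegree = n + 2 := by
      rw [natDegree_mul X_ne_zero h1m.ne_zero, natDegree_X, h1d]; omega
    have hlt : (fibPoly n).natDegree < (X * fibPoly (n+1)).natDegree := by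
      rw [hd, h0d]; omega
    have hltd : (fibPoly n).degree < (X * fibPoly (n+1)).degree :=
      degree_lt_degree hlt
    rw [fibPoly]
    exact ⟨hm.sub_of_left hltd, by rw [natDegree_sub_eq_left_of_natDegree_lt hlt, hd]⟩

lemma zero_coeffs (a : ℕ → ℚ) :
    ∀ N, (∑ k ∈ range N, C (a k) * fibPoly k) = 0 → ∀ k < N, a k = 0 := by
  intro N
  induction N with
  | zero => simp
  | succ N ih =>
    intro h k hk
    have hN : a N = 0 := by
      have h2 := congrArg (fun p => Polynomial.coeff p N) h
      simp only [finset_sum_coeff, coeff_C_mul, coeff_zero] at h2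
      rw [Finset.sum_range_succ, Finset.sum_eq_zero, zero_add] at h2
      · have hc1 : (fibPoly N).coeff N = 1 := by
          have := (fib_spec N).1.coeff_natDegree
          rwa [(fib_spec N).2] at this
        rwa [hc1, mul_one] at h2
      · intro j hj
        rw [coeff_eq_zero_of_natDegree_lt (by rw [(fib_spec j).2]; exact mem_range.mp hj),
          mul_zero]
    rcases Nat.lt_succ_iff_lt_or_eq.mp hk with h' | h'
    · apply ih _ _ h'
      rw [Finset.sum_range_succ, hN] at h
      simpa using h
    · rw [h', hN]

/-- The explicit coefficients. -/
noncomputable def d (n j : ℕ) : ℚ :=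
  if j ≤ n ∧ (n + j) % 2 = 0 then
    (n.choose ((n-j)/2) : ℚ) - (if (n-j)/2 = 0 then 0 else (n.choose ((n-j)/2 - 1) : ℚ))
  else 0

lemma d_big {n j : ℕ} (h : ¬ (j ≤ n ∧ (n + j) % 2 = 0)) : d n j = 0 := by
  rw [d, if_neg h]

lemma choose_diff (n m : ℕ) (hm : 1 ≤ m) :
    ((n+1).choose m : ℚ) - ((n+1).choose (m-1) : ℚ)
      = ((n.choose m : ℚ) - (if m = 0 then 0 else (n.choose (m-1):ℚ)))
        + ((n.choose (m-1) : ℚ) - (if m - 1 = 0 then 0 else (n.choose (m-2):ℚ))) := by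
  match m, hm with
  | 1, _ => simp [Nat.choose_one_right]
  | (k+2), _ =>
    have p1 : (n+1).choose (k+2) = n.choose (k+1) + n.choose (k+2) :=
      Nat.choose_succ_succ' n (k+1)
    have p2 : (n+1).choose (k+2-1) = n.choose k + n.choose (k+1) :=
      Nat.choose_succ_succ' n k
    rw [p1, p2, if_neg (by omega), if_neg (by omega),
      show k+2-1 = k+1 from rfl, show k+2-2 = k from rfl]
    push_cast
    ring

lemma dL1 (n : ℕ) : d (n+1) 0 = d n 1 := by
  rcases Nat.eq_zero_or_pos ((n+1) % 2) with h2 | h2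
  · have hn1 : 1 ≤ n := by omega
    set m := (n+1)/2 with hm
    have hm1 : 1 ≤ m := by omega
    have hsym : n.choose m = n.choose (m-1) := by
      have := Nat.choose_symm (n := n) (k := m-1) (by omega)
      rwa [show n - (m-1) = m by omega] at this
    have hsymQ : (n.choose m : ℚ) = n.choose (m-1) := by exact_mod_cast hsym
    rw [d, d, if_pos (⟨Nat.zero_le _, by omega⟩ : 0 ≤ n+1 ∧ (n+1+0)%2 = 0),
      if_pos (⟨hn1, by omega⟩ : 1 ≤ n ∧ (n+1)%2 = 0),
      show (n+1-0)/2 = m by omega, show (n-1)/2 = m-1 by omega,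
      if_neg (by omega : ¬ m = 0), choose_diff n m hm1, if_neg (by omega : ¬ m = 0),
      show m-1-1 = m-2 by omega]
    linarith
  · rw [d_big (by omega), d_big (by omega)]

lemma dL2 (n i : ℕ) : d (n+1) (i+1) = d n i + d n (i+2) := by
  rcases Nat.eq_zero_or_pos ((n+i) % 2) with hp | hp
  · rcases Nat.lt_or_ge n i with hni | hni
    · rw [d_big (by omega), d_big (by omega), d_big (by omega)]; ring
    · set m := (n-i)/2 with hm
      have hm2 : n - i = 2*m := by omega
      rcases Nat.lt_or_ge n (i+2) with hn2 | hn2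
      · -- n = i, m = 0
        have hni' : n = i := by omega
        rw [d, d, d_big (by omega), if_pos (⟨by omega, by omega⟩ : i+1 ≤ n+1 ∧ (n+1+(i+1))%2 = 0),
          if_pos (⟨hni, by omega⟩ : i ≤ n ∧ (n+i)%2 = 0),
          show (n+1-(i+1))/2 = 0 by omega, show (n-i)/2 = 0 by omega]
        simp
      · -- i+2 ≤ n, m ≥ 1
        have hm1 : 1 ≤ m := by omega
        rw [d, d, d,
          if_pos (⟨by omega, by omega⟩ : i+1 ≤ n+1 ∧ (n+1+(i+1))%2 = 0),
          if_pos (⟨hni, by omega⟩ : i ≤ n ∧ (n+i)%2 = 0),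
          if_pos (⟨hn2, by omega⟩ : i+2 ≤ n ∧ (n+(i+2))%2 = 0),
          show (n+1-(i+1))/2 = m by omega, show (n-i)/2 = m by omega,
          show (n-(i+2))/2 = m-1 by omega,
          if_neg (by omega : ¬ m = 0)]
        exact choose_diff n m hm1
  · rw [d_big (by omega), d_big (by omega), d_big (by omega)]; ring

noncomputable def Fm1 : ℕ → Polynomial ℚ
  | 0 => 0
  | (j+1) => fibPoly j

lemma xfib (j : ℕ) : X * fibPoly j = fibPoly (j+1) + Fm1 j := by
  cases j with
  | zero => simp [fibPoly, Fm1]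
  | succ k => rw [Fm1, fibPoly]; ring

lemma key (n : ℕ) : (X:Polynomial ℚ)^n = ∑ j ∈ range (n+1), C (d n j) * fibPoly j := by
  induction n with
  | zero => simp [d, fibPoly]
  | succ n ih =>
    have z1 : d n (n+1) = 0 := d_big (by omega)
    have z2 : d n (n+2) = 0 := d_big (by omega)
    calc (X:Polynomial ℚ)^(n+1) = X * X^n := by ring
    _ = ∑ j ∈ range (n+1), C (d n j) * (X * fibPoly j) := by
        rw [ih, Finset.mul_sum]; apply Finset.sum_congr rfl; intros; ring
    _ = (∑ j ∈ range (n+1), C (d n j) * fibPoly (j+1))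
        + ∑ j ∈ range (n+1), C (d n j) * Fm1 j := by
        rw [← Finset.sum_add_distrib]; apply Finset.sum_congr rfl
        intro j _; rw [xfib]; ring
    _ = (∑ j ∈ range (n+1), C (d n j) * fibPoly (j+1))
        + ∑ i ∈ range n, C (d n (i+1)) * fibPoly i := by
        congr 1
        rw [Finset.sum_range_succ']
        simp [Fm1]
    _ = (∑ j ∈ range (n+1), C (d n j) * fibPoly (j+1))
        + ∑ j ∈ range (n+2), C (d n (j+1)) * fibPoly j := by
        congr 1
        rw [Finset.sum_range_succ, Finset.sum_range_succ, z1, z2]; simp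
    _ = ∑ j ∈ range (n+2), C (d (n+1) j) * fibPoly j := by
        rw [Finset.sum_range_succ' (fun j => C (d (n+1) j) * fibPoly j) (n+1)]
        simp only [dL2, dL1, map_add, add_mul]
        rw [Finset.sum_add_distrib,
          Finset.sum_range_succ' (fun j => C (d n (j+1)) * fibPoly j) (n+1)]
        ring

theorem stmt_0 (c : ℕ → ℕ → ℚ)
    (hc : ∀ n : ℕ, (X : Polynomial ℚ) ^ n =
      ∑ k ∈ Finset.range (n + 1), Polynomial.C (c n k) * fibPoly k) :
    ∀ n k : ℕ, 2 * k ≤ n →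
      c n (n - 2 * k) =
        (n.choose k : ℚ) - (if k = 0 then 0 else (n.choose (k - 1) : ℚ)) := by
  intro n k hk
  have hu : ∀ j < n + 1, c n j = d n j := by
    intro j hj
    have h3 : (∑ j ∈ range (n+1), C (c n j - d n j) * fibPoly j) = 0 := by
      simp only [map_sub, sub_mul, Finset.sum_sub_distrib, ← hc n, ← key n, sub_self]
    have := zero_coeffs (fun j => c n j - d n j) (n+1) h3 j hj
    have this : c n j - d n j = 0 := this
    linarith
  rw [hu (n - 2*k) (by omega), d, if_pos (⟨by omega, by omega⟩ : n - 2*k ≤ n ∧ (n + (n-2*k))%2 = 0),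
    show (n - (n-2*k))/2 = k by omega]
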